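/- arXiv:2111.13207 — 3 statements merged into one kernel-verified Lean document; each statement's English description precedes it below -/
import Mathlib

section
/- Define Δ(s) = ‖u(x(s)) − U(s)‖², where u : ℝ^k → ℝ^n is C¹ satisfying Du(x)·a(x,u(x)) = c(x,u(x)), and (x(s), U(s)) solves x' = a(x, U), U' = c(x, U). If a and c are Lipschitz with constants A, B respectively and ‖Du(x(s))‖ ≤ M for all s ∈ [0, s₀], then Δ'(s) ≤ 2(AM + B) Δ(s) for all s ∈ [0, s₀]. -/
/-- Key differential inequality in the proof of the method of characteristics:
Δ(s) = ‖u(x(s)) − U(s)‖² satisfies Δ'(s) ≤ 2(AM + B)Δ(s). -/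
theorem moc_differential_inequality {k n : ℕ}
    (a : EuclideanSpace ℝ (Fin k) × EuclideanSpace ℝ (Fin n) → EuclideanSpace ℝ (Fin k))
    (c : EuclideanSpace ℝ (Fin k) × EuclideanSpace ℝ (Fin n) → EuclideanSpace ℝ (Fin n))
    (A B : NNReal) (ha : LipschitzWith A a) (hc : LipschitzWith B c)
    (u : EuclideanSpace ℝ (Fin k) → EuclideanSpace ℝ (Fin n))
    (hu : ContDiff ℝ 1 u)
    (hPDE : ∀ y, (fderiv ℝ u y) (a (y, u y)) = c (y, u y))
    (s₀ : ℝ) (hs₀ : 0 ≤ s₀)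
    (x : ℝ → EuclideanSpace ℝ (Fin k)) (U : ℝ → EuclideanSpace ℝ (Fin n))
    (hx' : ∀ s ∈ Set.Icc (0 : ℝ) s₀, HasDerivAt x (a (x s, U s)) s)
    (hU' : ∀ s ∈ Set.Icc (0 : ℝ) s₀, HasDerivAt U (c (x s, U s)) s)
    (M : ℝ) (hM : ∀ s ∈ Set.Icc (0 : ℝ) s₀, ‖fderiv ℝ u (x s)‖ ≤ M) :
    ∀ s ∈ Set.Icc (0 : ℝ) s₀,
      deriv (fun r => ‖u (x r) - U r‖ ^ 2) s
        ≤ 2 * ((A : ℝ) * M + (B : ℝ)) * ‖u (x s) - U s‖ ^ 2 := by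
  intro s hs
  set Du := fderiv ℝ u (x s) with hDu
  have hux : HasDerivAt (fun r => u (x r)) (Du (a (x s, U s))) s :=
    ((hu.differentiable one_ne_zero (x s)).hasFDerivAt).comp_hasDerivAt s (hx' s hs)
  set v : EuclideanSpace ℝ (Fin n) := Du (a (x s, U s)) - c (x s, U s) with hv
  have hf : HasDerivAt (fun r => u (x r) - U r) v s := hux.sub (hU' s hs)
  have hinner : HasDerivAt (fun r => inner ℝ (u (x r) - U r) (u (x r) - U r) : ℝ → ℝ)
      (inner ℝ (u (x s) - U s) v + inner ℝ v (u (x s) - U s)) s := hf.inner ℝ hf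
  have heq : (fun r => ‖u (x r) - U r‖ ^ 2)
      = (fun r => inner ℝ (u (x r) - U r) (u (x r) - U r) : ℝ → ℝ) := by
    funext r; rw [real_inner_self_eq_norm_sq]
  rw [heq, hinner.deriv]
  have hcomm : (inner ℝ v (u (x s) - U s) : ℝ) = inner ℝ (u (x s) - U s) v := real_inner_comm _ _
  rw [hcomm]
  have hMnn : 0 ≤ M := le_trans (norm_nonneg _) (hM s hs)
  -- rewrite v using the PDE
  have hv2 : v = Du (a (x s, U s) - a (x s, u (x s))) + (c (x s, u (x s)) - c (x s, U s)) := by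
    rw [hv, map_sub, hPDE (x s)]
    abel
  have hdist : ∀ (w z : EuclideanSpace ℝ (Fin n)),
      dist ((x s, w) : EuclideanSpace ℝ (Fin k) × EuclideanSpace ℝ (Fin n)) (x s, z)
        = dist w z := by
    intro w z
    rw [Prod.dist_eq]
    simp [dist_self, dist_nonneg]
  have hav : ‖a (x s, U s) - a (x s, u (x s))‖ ≤ (A : ℝ) * ‖u (x s) - U s‖ := by
    have := ha.dist_le_mul (x s, U s) (x s, u (x s))
    rw [hdist] at this
    rw [← dist_eq_norm, ← dist_eq_norm] at *
    rwa [dist_comm (u (x s))]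
  have hcv : ‖c (x s, u (x s)) - c (x s, U s)‖ ≤ (B : ℝ) * ‖u (x s) - U s‖ := by
    have := hc.dist_le_mul (x s, u (x s)) (x s, U s)
    rw [hdist] at this
    rwa [← dist_eq_norm, ← dist_eq_norm]
  have hvnorm : ‖v‖ ≤ ((A : ℝ) * M + (B : ℝ)) * ‖u (x s) - U s‖ := by
    rw [hv2]
    calc ‖Du (a (x s, U s) - a (x s, u (x s))) + (c (x s, u (x s)) - c (x s, U s))‖
        ≤ ‖Du (a (x s, U s) - a (x s, u (x s)))‖ + ‖c (x s, u (x s)) - c (x s, U s)‖ :=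
          norm_add_le _ _
      _ ≤ ‖Du‖ * ‖a (x s, U s) - a (x s, u (x s))‖ + (B : ℝ) * ‖u (x s) - U s‖ :=
          add_le_add (Du.le_opNorm _) hcv
      _ ≤ M * ((A : ℝ) * ‖u (x s) - U s‖) + (B : ℝ) * ‖u (x s) - U s‖ := by
          gcongr
          exact hM s hs
      _ = ((A : ℝ) * M + (B : ℝ)) * ‖u (x s) - U s‖ := by ring
  have hip : (inner ℝ (u (x s) - U s) v : ℝ) ≤ ((A : ℝ) * M + (B : ℝ)) * ‖u (x s) - U s‖ ^ 2 := by
    calc (inner ℝ (u (x s) - U s) v : ℝ) ≤ ‖u (x s) - U s‖ * ‖v‖ := real_inner_le_norm _ _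
      _ ≤ ‖u (x s) - U s‖ * (((A : ℝ) * M + (B : ℝ)) * ‖u (x s) - U s‖) := by
          gcongr
      _ = ((A : ℝ) * M + (B : ℝ)) * ‖u (x s) - U s‖ ^ 2 := by ring
  rw [← real_inner_self_eq_norm_sq] at hip ⊢
  linarith
end

section
/- There is no continuous function G : ℝ₊ × ℝ → ℝ that is Lipschitz in the second argument such that the flow of the scalar ODE u'(s) = G(s, u(s)) maps u(0) = 1 to u(1) = 0 and u(0) = 0 to u(1) = 1. -/
/-- There is no continuous G : ℝ₊ × ℝ → ℝ, Lipschitz in the second argument,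
whose scalar ODE flow maps u(0) = 1 to u(1) = 0 and u(0) = 0 to u(1) = 1. -/
theorem no_scalar_ode_swaps_initial_conditions :
    ¬ ∃ (G : ℝ → ℝ → ℝ) (K : NNReal),
      ContinuousOn (fun p : ℝ × ℝ => G p.1 p.2) (Set.Ici (0 : ℝ) ×ˢ Set.univ) ∧
      (∀ s ∈ Set.Ici (0 : ℝ), LipschitzWith K (G s)) ∧
      ∃ u v : ℝ → ℝ,
        (∀ s ∈ Set.Icc (0 : ℝ) 1, HasDerivAt u (G s (u s)) s) ∧
        (∀ s ∈ Set.Icc (0 : ℝ) 1, HasDerivAt v (G s (v s)) s) ∧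
        u 0 = 1 ∧ u 1 = 0 ∧ v 0 = 0 ∧ v 1 = 1 := by
  rintro ⟨G, K, _hcont, hlip, u, v, hu, hv, hu0, hu1, hv0, hv1⟩
  -- continuity of u and v on [0,1]
  have hcu : ContinuousOn u (Set.Icc (0:ℝ) 1) := fun t ht =>
    ((hu t ht).continuousAt).continuousWithinAt
  have hcv : ContinuousOn v (Set.Icc (0:ℝ) 1) := fun t ht =>
    ((hv t ht).continuousAt).continuousWithinAt
  -- IVT: u - v changes sign on [0,1]
  have hw : ContinuousOn (fun t => u t - v t) (Set.Icc (0:ℝ) 1) := hcu.sub hcv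
  have h01 : (0:ℝ) ≤ 1 := zero_le_one
  have hmem : (0:ℝ) ∈ Set.Icc (u 1 - v 1) (u 0 - v 0) := by
    rw [hu0, hu1, hv0, hv1]; norm_num
  obtain ⟨t₀, ht₀, heq⟩ := intermediate_value_Icc' h01 hw hmem
  have heq' : u t₀ = v t₀ := sub_eq_zero.mp heq
  -- modified vector field defined for all t
  set W : ℝ → ℝ → ℝ := fun t x => G (max t 0) x with hW
  have hvlip : ∀ t, LipschitzOnWith K (W t) (Set.univ) := fun t =>
    (hlip (max t 0) (Set.mem_Ici.mpr (le_max_right _ _))).lipschitzOnWith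
  have ht₀0 : (0:ℝ) ≤ t₀ := ht₀.1
  have ht₀1 : t₀ ≤ 1 := ht₀.2
  have hsub : Set.Icc t₀ 1 ⊆ Set.Icc (0:ℝ) 1 := Set.Icc_subset_Icc ht₀0 le_rfl
  have hueq : Set.EqOn u v (Set.Icc t₀ 1) := by
    apply ODE_solution_unique_of_mem_Icc_right (fun t _ => hvlip t) (hcu.mono hsub) _ (fun _ _ => trivial)
      (hcv.mono hsub) _ (fun _ _ => trivial) heq'
    · intro t ht
      have htmem : t ∈ Set.Icc (0:ℝ) 1 := ⟨le_trans ht₀0 ht.1, ht.2.le⟩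
      have : max t 0 = t := max_eq_left htmem.1
      simpa [hW, this] using (hu t htmem).hasDerivWithinAt
    · intro t ht
      have htmem : t ∈ Set.Icc (0:ℝ) 1 := ⟨le_trans ht₀0 ht.1, ht.2.le⟩
      have : max t 0 = t := max_eq_left htmem.1
      simpa [hW, this] using (hv t htmem).hasDerivWithinAt
  have : u 1 = v 1 := hueq ⟨ht₀1, le_rfl⟩
  rw [hu1, hv1] at this
  norm_num at this
end

section
/- Let p₀ be a probability density on ℝ^n and let φ_s be the flow of du/ds = F(u) with F ∈ C¹ and all derivatives bounded. Define p_s as the pushforward density of p₀ under φ_s. Then for any u in the range of the flow, log p_s(φ_s(u)) = log p₀(u) − ∫₀^s tr(DF(φ_r(u))) dr. -/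
open Matrix Finset

/-- Key algebraic identity behind Liouville's formula:
`∑ i, det (A with column i replaced by the i-th column of B * A) = tr B * det A`. -/
lemma sum_det_updateColumn {n : ℕ} (A B : Matrix (Fin n) (Fin n) ℝ) :
    ∑ i, (A.updateCol i (fun r => (B * A) r i)).det = B.trace * A.det := by
  have h1 : ∀ i : Fin n, (A.updateCol i fun r => (B * A) r i).det
      = ∑ l, A l i * (A.updateCol i fun r => B r l).det := by
    intro i
    rw [← cramer_apply]
    have hv : (fun r => (B * A) r i) = ∑ l, A l i • (fun r => B r l) := by
      funext r
      simp [Matrix.mul_apply, Finset.sum_apply, mul_comm]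
    rw [hv, map_sum]
    simp [Finset.sum_apply, cramer_apply]
  simp_rw [h1]
  rw [Finset.sum_comm]
  have h2 : ∀ l : Fin n, ∑ i, A l i * (A.updateCol i fun r => B r l).det
      = A.det * B l l := by
    intro l
    have := congrFun (Matrix.mulVec_cramer A (fun r => B r l)) l
    simpa [Matrix.mulVec, dotProduct, cramer_apply] using this
  simp_rw [h2]
  simp [Matrix.trace, Matrix.diag, Finset.mul_sum, Finset.sum_mul, mul_comm]

/-- Derivative of the determinant along a path of matrices. -/
lemma hasDerivAt_det_path {n : ℕ} {M : ℝ → Matrix (Fin n) (Fin n) ℝ}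
    {M' : Matrix (Fin n) (Fin n) ℝ} {s : ℝ}
    (h : ∀ i j, HasDerivAt (fun t => M t i j) (M' i j) s) :
    HasDerivAt (fun t => (M t).det)
      (∑ i, ((M s).updateCol i (fun r => M' r i)).det) s := by
  have hterm : ∀ σ : Equiv.Perm (Fin n), HasDerivAt (fun t => ∏ i, M t (σ i) i)
      (∑ i, (∏ j ∈ Finset.univ.erase i, M s (σ j) j) * M' (σ i) i) s := by
    intro σ
    have := HasDerivAt.fun_finsetProd (u := Finset.univ) (f := fun i t => M t (σ i) i)
      (f' := fun i => M' (σ i) i) (x := s) (fun i _ => h (σ i) i)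
    simpa [smul_eq_mul] using this
  have hsum : HasDerivAt (fun t => ∑ σ : Equiv.Perm (Fin n),
        ((Equiv.Perm.sign σ : ℤ) : ℝ) * ∏ i, M t (σ i) i)
      (∑ σ : Equiv.Perm (Fin n), ((Equiv.Perm.sign σ : ℤ) : ℝ) *
        ∑ i, (∏ j ∈ Finset.univ.erase i, M s (σ j) j) * M' (σ i) i) s :=
    HasDerivAt.fun_sum (fun σ _ => (hterm σ).const_mul _)
  have hfun : (fun t => (M t).det) = fun t => ∑ σ : Equiv.Perm (Fin n),
      ((Equiv.Perm.sign σ : ℤ) : ℝ) * ∏ i, M t (σ i) i := by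
    funext t; rw [Matrix.det_apply']
  have htarget : ∑ i, ((M s).updateCol i (fun r => M' r i)).det
      = ∑ σ : Equiv.Perm (Fin n), ((Equiv.Perm.sign σ : ℤ) : ℝ) *
        ∑ i, (∏ j ∈ Finset.univ.erase i, M s (σ j) j) * M' (σ i) i := by
    have h3 : ∀ i : Fin n, ((M s).updateCol i (fun r => M' r i)).det
        = ∑ σ : Equiv.Perm (Fin n), ((Equiv.Perm.sign σ : ℤ) : ℝ) *
          ((∏ j ∈ Finset.univ.erase i, M s (σ j) j) * M' (σ i) i) := by
      intro i
      rw [Matrix.det_apply']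
      refine Finset.sum_congr rfl fun σ _ => ?_
      congr 1
      rw [← Finset.mul_prod_erase Finset.univ _ (Finset.mem_univ i)]
      rw [Matrix.updateCol_self, mul_comm]
      congr 1
      refine Finset.prod_congr rfl fun j hj => ?_
      rw [Matrix.updateCol_apply, if_neg (Finset.ne_of_mem_erase hj)]
    simp_rw [h3]
    rw [Finset.sum_comm]
    simp [Finset.mul_sum]
  rw [hfun, htarget]
  exact hsum

/-- Liouville's formula for the flow of `du/ds = F(u)`:
the determinant of the Jacobian of the flow map equals the exponential of the
time integral of the divergence of `F` along the trajectory. -/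
lemma flow_det_eq_exp {n : ℕ}
    (F : EuclideanSpace ℝ (Fin n) → EuclideanSpace ℝ (Fin n))
    (hF : ContDiff ℝ 1 F)
    (hFbdd : ∃ C : ℝ, ∀ v, ‖fderiv ℝ F v‖ ≤ C)
    (φ : ℝ → EuclideanSpace ℝ (Fin n) → EuclideanSpace ℝ (Fin n))
    (hφ0 : φ 0 = id)
    (hφ : ∀ (s : ℝ) (v : EuclideanSpace ℝ (Fin n)),
      HasDerivAt (fun r => φ r v) (F (φ s v)) s)
    (hφC1 : ContDiff ℝ 1 fun q : ℝ × EuclideanSpace ℝ (Fin n) => φ q.1 q.2)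
    (u : EuclideanSpace ℝ (Fin n)) (s : ℝ) :
    LinearMap.det (fderiv ℝ (φ s) u :
        EuclideanSpace ℝ (Fin n) →ₗ[ℝ] EuclideanSpace ℝ (Fin n)) =
      Real.exp (∫ r in (0:ℝ)..s, LinearMap.trace ℝ (EuclideanSpace ℝ (Fin n))
        (fderiv ℝ F (φ r u) : EuclideanSpace ℝ (Fin n) →ₗ[ℝ] EuclideanSpace ℝ (Fin n))) := by
  classical
  obtain ⟨C, hC⟩ := hFbdd
  have hCnn : 0 ≤ C := le_trans (norm_nonneg _) (hC 0)
  have hφcont : Continuous fun q : ℝ × EuclideanSpace ℝ (Fin n) => φ q.1 q.2 := hφC1.continuous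
  have hφdiff : Differentiable ℝ (fun q : ℝ × EuclideanSpace ℝ (Fin n) => φ q.1 q.2) :=
    hφC1.differentiable one_ne_zero
  have hφx : ∀ x : EuclideanSpace ℝ (Fin n), Continuous fun t : ℝ => φ t x := fun x =>
    hφcont.comp (continuous_id.prodMk continuous_const)
  set Jm : ℝ × EuclideanSpace ℝ (Fin n) →
      (EuclideanSpace ℝ (Fin n) →L[ℝ] EuclideanSpace ℝ (Fin n)) :=
    fun q => ((fderiv ℝ (fun q : ℝ × EuclideanSpace ℝ (Fin n) => φ q.1 q.2) q).comp
      (ContinuousLinearMap.inr ℝ ℝ (EuclideanSpace ℝ (Fin n)))) with hJm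
  have hJm_cont : Continuous Jm :=
    Continuous.clm_comp (hφC1.continuous_fderiv one_ne_zero) continuous_const
  have hJ : ∀ (t : ℝ) (x : EuclideanSpace ℝ (Fin n)), HasFDerivAt (φ t) (Jm (t, x)) x := by
    intro t x
    have h1 : HasFDerivAt (fun v : EuclideanSpace ℝ (Fin n) => ((t, v) : ℝ × _))
        (ContinuousLinearMap.inr ℝ ℝ (EuclideanSpace ℝ (Fin n))) x :=
      hasFDerivAt_prodMk_right t x
    exact ((hφdiff (t, x)).hasFDerivAt).comp x h1
  have key0 : ∀ (x : EuclideanSpace ℝ (Fin n)) (r : ℝ),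
      φ r x = x + ∫ t in (0:ℝ)..r, F (φ t x) := by
    intro x r
    have h2 : ∫ t in (0:ℝ)..r, F (φ t x) = φ r x - φ 0 x :=
      intervalIntegral.integral_eq_sub_of_hasDerivAt (fun t _ => hφ t x)
        ((hF.continuous.comp (hφx x)).intervalIntegrable 0 r)
    rw [h2, hφ0]
    simp
  set G : ℝ → (EuclideanSpace ℝ (Fin n) →L[ℝ] EuclideanSpace ℝ (Fin n)) :=
    fun t => (fderiv ℝ F (φ t u)).comp (Jm (t, u)) with hGdef
  have hBc : Continuous fun t : ℝ => fderiv ℝ F (φ t u) :=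
    (hF.continuous_fderiv one_ne_zero).comp (hφx u)
  have hGcont : Continuous G :=
    hBc.clm_comp (hJm_cont.comp (continuous_id.prodMk continuous_const))
  have hint : ∀ r : ℝ, HasFDerivAt (fun x => ∫ t in (0:ℝ)..r, F (φ t x))
      (∫ t in (0:ℝ)..r, G t) u := by
    intro r
    obtain ⟨K, hK⟩ := (isCompact_uIcc.prod (isCompact_closedBall u 1)).exists_bound_of_continuousOn
      hJm_cont.continuousOn
    refine intervalIntegral.hasFDerivAt_integral_of_dominated_of_fderiv_le
      (F' := fun x t => (fderiv ℝ F (φ t x)).comp (Jm (t, x)))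
      (bound := fun _ => C * K) (Metric.ball_mem_nhds u one_pos) ?_ ?_ ?_ ?_ ?_ ?_
    · exact Filter.Eventually.of_forall fun x =>
        ((hF.continuous.comp (hφx x)).aestronglyMeasurable)
    · exact (hF.continuous.comp (hφx u)).intervalIntegrable 0 r
    · exact hGcont.aestronglyMeasurable
    · refine Filter.Eventually.of_forall fun t ht x hx => ?_
      refine le_trans (ContinuousLinearMap.opNorm_comp_le _ _) ?_
      have h4 : ‖Jm (t, x)‖ ≤ K :=
        hK (t, x) ⟨Set.uIoc_subset_uIcc ht, Metric.ball_subset_closedBall hx⟩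
      exact mul_le_mul (hC _) h4 (norm_nonneg _) hCnn
    · exact intervalIntegrable_const
    · refine Filter.Eventually.of_forall fun t _ x _ => ?_
      exact ((hF.differentiable one_ne_zero _).hasFDerivAt).comp x (hJ t x)
  set J : ℝ → (EuclideanSpace ℝ (Fin n) →L[ℝ] EuclideanSpace ℝ (Fin n)) :=
    fun r : ℝ => Jm (r, u) with hJdef
  have hJeq : ∀ r : ℝ, J r = ContinuousLinearMap.id ℝ (EuclideanSpace ℝ (Fin n))
      + ∫ t in (0:ℝ)..r, G t := by
    intro r
    have h6 : (fun x => x + ∫ t in (0:ℝ)..r, F (φ t x)) = φ r :=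
      funext fun x => (key0 x r).symm
    have h5 : HasFDerivAt (φ r) (ContinuousLinearMap.id ℝ (EuclideanSpace ℝ (Fin n))
        + ∫ t in (0:ℝ)..r, G t) u := by
      rw [← h6]
      exact (hasFDerivAt_id u).add (hint r)
    exact (hJ r u).unique h5
  have hJode : ∀ r : ℝ, HasDerivAt J (G r) r := by
    intro r
    have h7 : HasDerivAt (fun r' => ∫ t in (0:ℝ)..r', G t) (G r) r :=
      intervalIntegral.integral_hasDerivAt_right (hGcont.intervalIntegrable 0 r)
        (hGcont.stronglyMeasurableAtFilter _ _) hGcont.continuousAt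
    have h8 : HasDerivAt (fun r' => ContinuousLinearMap.id ℝ (EuclideanSpace ℝ (Fin n))
        + ∫ t in (0:ℝ)..r', G t) (G r) r := h7.const_add _
    have h9 : J = fun r' => ContinuousLinearMap.id ℝ (EuclideanSpace ℝ (Fin n))
        + ∫ t in (0:ℝ)..r', G t := funext hJeq
    rw [h9]
    exact h8
  set b : Module.Basis (Fin n) ℝ (EuclideanSpace ℝ (Fin n)) :=
    (EuclideanSpace.basisFun (Fin n) ℝ).toBasis with hb
  set Lmat : (EuclideanSpace ℝ (Fin n) →L[ℝ] EuclideanSpace ℝ (Fin n)) →ₗ[ℝ]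
      Matrix (Fin n) (Fin n) ℝ :=
    (LinearMap.toMatrix b b).toLinearMap ∘ₗ ContinuousLinearMap.coeLM ℝ with hLmat
  have hMder : ∀ (i j : Fin n) (r : ℝ),
      HasDerivAt (fun t => Lmat (J t) i j) (Lmat (G r) i j) r := by
    intro i j r
    let ev : Matrix (Fin n) (Fin n) ℝ →ₗ[ℝ] ℝ :=
      ((LinearMap.proj j : (Fin n → ℝ) →ₗ[ℝ] ℝ).comp
        (LinearMap.proj i : (Matrix (Fin n) (Fin n) ℝ) →ₗ[ℝ] (Fin n → ℝ)))
    let L := ev ∘ₗ Lmat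
    have h10 := (LinearMap.toContinuousLinearMap L).hasFDerivAt.comp_hasDerivAt r (hJode r)
    exact h10
  have hGM : ∀ r : ℝ, Lmat (G r) = Lmat (fderiv ℝ F (φ r u)) * Lmat (J r) := by
    intro r
    show (LinearMap.toMatrix b b) ((fderiv ℝ F (φ r u)).comp (Jm (r, u)) :
        EuclideanSpace ℝ (Fin n) →ₗ[ℝ] EuclideanSpace ℝ (Fin n)) = _
    rw [ContinuousLinearMap.toLinearMap_comp, LinearMap.toMatrix_comp b b b]
    rfl
  set T : ℝ → ℝ := fun r => LinearMap.trace ℝ (EuclideanSpace ℝ (Fin n))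
    (fderiv ℝ F (φ r u) : EuclideanSpace ℝ (Fin n) →ₗ[ℝ] EuclideanSpace ℝ (Fin n)) with hT
  have hTtr : ∀ r : ℝ, (Lmat (fderiv ℝ F (φ r u))).trace = T r := fun r =>
    (LinearMap.trace_eq_matrix_trace ℝ b _).symm
  set D : ℝ → ℝ := fun t => (Lmat (J t)).det with hD
  have hDder : ∀ r : ℝ, HasDerivAt D (T r * D r) r := by
    intro r
    have h9 := hasDerivAt_det_path (M := fun t => Lmat (J t)) (M' := Lmat (G r)) (s := r)
      (fun i j => hMder i j r)
    rw [hGM r, sum_det_updateColumn, hTtr r] at h9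
    exact h9
  have hTcont : Continuous T := by
    have h11 : Continuous fun f : EuclideanSpace ℝ (Fin n) →L[ℝ] EuclideanSpace ℝ (Fin n) =>
        LinearMap.trace ℝ (EuclideanSpace ℝ (Fin n))
          (f : EuclideanSpace ℝ (Fin n) →ₗ[ℝ] EuclideanSpace ℝ (Fin n)) :=
      LinearMap.continuous_of_finiteDimensional
        ((LinearMap.trace ℝ (EuclideanSpace ℝ (Fin n))) ∘ₗ ContinuousLinearMap.coeLM ℝ)
    exact h11.comp hBc
  set g : ℝ → ℝ := fun r => ∫ t in (0:ℝ)..r, T t with hg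
  have hgder : ∀ r : ℝ, HasDerivAt g (T r) r := fun r =>
    intervalIntegral.integral_hasDerivAt_right (hTcont.intervalIntegrable 0 r)
      (hTcont.stronglyMeasurableAtFilter _ _) hTcont.continuousAt
  have hD0 : D 0 = 1 := by
    have h12 : HasFDerivAt (φ 0) (ContinuousLinearMap.id ℝ (EuclideanSpace ℝ (Fin n))) u := by
      rw [hφ0]; exact hasFDerivAt_id u
    have hJ0 : J 0 = ContinuousLinearMap.id ℝ (EuclideanSpace ℝ (Fin n)) :=
      (hJ 0 u).unique h12
    show (Lmat (J 0)).det = 1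
    rw [hJ0]
    show ((LinearMap.toMatrix b b) ((ContinuousLinearMap.id ℝ (EuclideanSpace ℝ (Fin n))) :
        EuclideanSpace ℝ (Fin n) →ₗ[ℝ] EuclideanSpace ℝ (Fin n))).det = 1
    rw [LinearMap.det_toMatrix]
    simp
  have hconst : ∀ r : ℝ, Real.exp (-g r) * D r = Real.exp (-g 0) * D 0 := by
    intro r
    have hder : ∀ x : ℝ, HasDerivAt (fun y => Real.exp (-g y) * D y) 0 x := by
      intro x
      have h11 : HasDerivAt (fun y => Real.exp (-g y)) (Real.exp (-g x) * (-T x)) x :=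
        ((hgder x).neg).exp
      have h12 := h11.fun_mul (hDder x)
      exact h12.congr_deriv (by ring)
    exact is_const_of_deriv_eq_zero (fun x => (hder x).differentiableAt)
      (fun x => (hder x).deriv) r 0
  have hDs : D s = Real.exp (g s) := by
    have h13 := hconst s
    have hg0 : g 0 = 0 := intervalIntegral.integral_same
    rw [hg0, hD0] at h13
    simp only [neg_zero, Real.exp_zero, mul_one] at h13
    rw [Real.exp_neg] at h13
    exact ((inv_mul_eq_one₀ (Real.exp_ne_zero _)).mp h13).symm
  have hfds : fderiv ℝ (φ s) u = J s := (hJ s u).fderiv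
  rw [hfds]
  have h14 : LinearMap.det ((J s : EuclideanSpace ℝ (Fin n) →L[ℝ] EuclideanSpace ℝ (Fin n)) :
      EuclideanSpace ℝ (Fin n) →ₗ[ℝ] EuclideanSpace ℝ (Fin n)) = D s :=
    (LinearMap.det_toMatrix b _).symm
  rw [h14]
  exact hDs

/-- Integrated change-of-variables formula for continuous normalizing flows:
if φ_s is the flow of du/ds = F(u) with F ∈ C¹ with bounded derivative, and
p_s is the pushforward density of p₀ under φ_s, then
log p_s(φ_s(u)) = log p₀(u) − ∫₀ˢ tr(DF(φ_r(u))) dr. -/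
theorem cnf_integrated_log_density {n : ℕ}
    (F : EuclideanSpace ℝ (Fin n) → EuclideanSpace ℝ (Fin n))
    (hF : ContDiff ℝ 1 F)
    (hFbdd : ∃ C : ℝ, ∀ v, ‖fderiv ℝ F v‖ ≤ C)
    (φ : ℝ → EuclideanSpace ℝ (Fin n) → EuclideanSpace ℝ (Fin n))
    (hφ0 : φ 0 = id)
    (hφ : ∀ (s : ℝ) (v : EuclideanSpace ℝ (Fin n)),
      HasDerivAt (fun r => φ r v) (F (φ s v)) s)
    (hφC1 : ContDiff ℝ 1 fun q : ℝ × EuclideanSpace ℝ (Fin n) => φ q.1 q.2)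
    (p₀ : EuclideanSpace ℝ (Fin n) → ℝ) (hp₀ : ∀ v, 0 < p₀ v)
    (p : ℝ → EuclideanSpace ℝ (Fin n) → ℝ)
    (hp : ∀ (s : ℝ) (v : EuclideanSpace ℝ (Fin n)),
      p s (φ s v) * |LinearMap.det
        (fderiv ℝ (φ s) v : EuclideanSpace ℝ (Fin n) →ₗ[ℝ] EuclideanSpace ℝ (Fin n))| = p₀ v)
    (u : EuclideanSpace ℝ (Fin n)) (s : ℝ) :
    Real.log (p s (φ s u)) = Real.log (p₀ u) -
      ∫ r in (0 : ℝ)..s, LinearMap.trace ℝ (EuclideanSpace ℝ (Fin n))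
        (fderiv ℝ F (φ r u) : EuclideanSpace ℝ (Fin n) →ₗ[ℝ] EuclideanSpace ℝ (Fin n)) := by
  have hdet := flow_det_eq_exp F hF hFbdd φ hφ0 hφ hφC1 u s
  have h1 := hp s u
  rw [hdet, abs_of_pos (Real.exp_pos _)] at h1
  have hps : p s (φ s u) = p₀ u / Real.exp (∫ r in (0 : ℝ)..s,
      LinearMap.trace ℝ (EuclideanSpace ℝ (Fin n))
        (fderiv ℝ F (φ r u) : EuclideanSpace ℝ (Fin n) →ₗ[ℝ] EuclideanSpace ℝ (Fin n))) :=
    (eq_div_iff (Real.exp_ne_zero _)).mpr h1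
  rw [hps, Real.log_div (ne_of_gt (hp₀ u)) (Real.exp_ne_zero _), Real.log_exp]
end
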